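/- Let u be a real number with 0 < u < arccosh(3/2), p a positive integer, ξ := u + 2pπi, and let U₀ := {z ∈ ℂ : 0 < Re z + (u/(2pπ))·Im z < 1/p}. Then for every z ∈ U₀: (i) e^{ξ(1−z)} ∉ (1,∞) and e^{ξ(1+z)} ∉ (1,∞), and (1/ξ)·Li₂(e^{ξ(1−z)}) − (1/ξ)·Li₂(e^{ξ(1+z)}) − uz + 4pπ²/ξ = F(z); (ii) e^{u} + e^{−u} − e^{ξz} − e^{−ξz} ∉ (−∞, 0], and the complex derivative of F at z equals log(e^{u} + e^{−u} − e^{ξz} − e^{−ξz}), where log is the principal branch. -/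

import Mathlib

open Complex MeasureTheory Set intervalIntegral

/-- Inverse hyperbolic cosine. -/
noncomputable def arccosh (x : ℝ) : ℝ := Real.log (x + Real.sqrt (x ^ 2 - 1))

/-- ξ = u + 2pπi -/
noncomputable def xiC (u : ℝ) (p : ℕ) : ℂ := (u : ℂ) + 2 * p * Real.pi * Complex.I

/-- The dilogarithm. -/
noncomputable def Li2 (z : ℂ) : ℂ := -∫ t in (0:ℝ)..1, Complex.log (1 - t * z) / t

/-- φ(u). -/
noncomputable def phiu (u : ℝ) : ℂ :=
  Complex.log ((Real.cosh u : ℂ) - 1/2 -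
    (Complex.I / 2) * (Real.sqrt ((2 * Real.cosh u + 1) * (3 - 2 * Real.cosh u)) : ℂ))

/-- The potential function F. -/
noncomputable def Ffun (u : ℝ) (p : ℕ) (z : ℂ) : ℂ :=
  (1 / xiC u p) * Li2 (Complex.exp (-(xiC u p) * (1 + z))) -
  (1 / xiC u p) * Li2 (Complex.exp (-(xiC u p) * (1 - z))) +
  (u : ℂ) * z - 2 * Real.pi * Complex.I


def OffCut (w : ℂ) : Prop := w.im ≠ 0 ∨ w.re < 0

lemma OffCut.ne_zero {w : ℂ} (h : OffCut w) : w ≠ 0 := by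
  rintro rfl
  simpa [OffCut] using h

lemma OffCut.slit {w : ℂ} (h : OffCut w) {t : ℝ} (ht : 0 ≤ t) :
    (1 - t * w) ∈ Complex.slitPlane := by
  rw [Complex.mem_slitPlane_iff]
  rcases h with h | h
  · rcases eq_or_lt_of_le ht with rfl | ht'
    · simp
    · right
      simp only [Complex.sub_im, Complex.one_im, Complex.mul_im, Complex.ofReal_re,
        Complex.ofReal_im]
      intro hc
      apply h
      have : t * w.im = 0 := by linarith [hc]
      rcases mul_eq_zero.1 this with h' | h'
      · exact absurd h' (ne_of_gt ht')
      · exact h'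
  · left
    simp only [Complex.sub_re, Complex.one_re, Complex.mul_re, Complex.ofReal_re,
      Complex.ofReal_im]
    nlinarith

lemma isOpen_offCut : IsOpen {w : ℂ | OffCut w} := by
  have : {w : ℂ | OffCut w} = (Complex.im ⁻¹' {x | x ≠ 0}) ∪ (Complex.re ⁻¹' {x | x < 0}) := by
    ext w; rfl
  rw [this]
  exact (IsOpen.preimage Complex.continuous_im (isOpen_ne_fun continuous_id continuous_const)).union
    (IsOpen.preimage Complex.continuous_re (isOpen_lt continuous_id continuous_const))

lemma Li2_integrand_meas (x : ℂ) :
    AEStronglyMeasurable (fun t : ℝ => Complex.log (1 - ↑t * x) / ↑t)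
      (volume.restrict (Set.uIoc (0:ℝ) 1)) := by
  refine Measurable.aestronglyMeasurable ?_
  exact (Complex.measurable_log.comp
    ((measurable_const.sub (Complex.measurable_ofReal.mul_const x)))).div
    Complex.measurable_ofReal

lemma Li2_integrand_integrable {x : ℂ} (hx : OffCut x) :
    IntervalIntegrable (fun t : ℝ => Complex.log (1 - ↑t * x) / ↑t) volume 0 1 := by
  set δ : ℝ := min 1 (1 / (2 * (‖x‖ + 1))) with hδdef
  have hδpos : 0 < δ := by
    apply lt_min one_pos
    positivity
  have hδ1 : δ ≤ 1 := min_le_left _ _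
  have h1 : IntervalIntegrable (fun t : ℝ => Complex.log (1 - ↑t * x) / ↑t) volume 0 δ := by
    rw [intervalIntegrable_iff_integrableOn_Ioc_of_le hδpos.le]
    apply Integrable.mono' (integrableOn_const (C := 2 * ‖x‖) measure_Ioc_lt_top.ne)
      (by
        refine Measurable.aestronglyMeasurable ?_
        exact (Complex.measurable_log.comp
          ((measurable_const.sub (Complex.measurable_ofReal.mul_const x)))).div
          Complex.measurable_ofReal)
    · filter_upwards [ae_restrict_mem measurableSet_Ioc] with t ht
      have ht0 : 0 < t := ht.1
      have htx : ‖-(↑t * x)‖ ≤ 1/2 := by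
        rw [norm_neg]
        have : ‖(t:ℂ) * x‖ = t * ‖x‖ := by
          rw [norm_mul, Complex.norm_real, Real.norm_of_nonneg ht0.le]
        rw [this]
        have h2 : t ≤ 1 / (2 * (‖x‖ + 1)) := le_trans ht.2 (min_le_right _ _)
        have hx1 : 0 ≤ ‖x‖ := norm_nonneg x
        rw [le_div_iff₀ (by positivity : (0:ℝ) < 2 * (‖x‖ + 1))] at h2
        nlinarith
      have hb := Complex.norm_log_one_add_half_le_self htx
      have heq : (1:ℂ) - ↑t * x = 1 + -(↑t * x) := by ring
      rw [norm_div, heq]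
      have : ‖(t:ℂ)‖ = t := by rw [Complex.norm_real, Real.norm_of_nonneg ht0.le]
      rw [this, div_le_iff₀ ht0]
      calc ‖Complex.log (1 + -(↑t * x))‖ ≤ 3/2 * ‖-(↑t * x)‖ := hb
        _ = 3/2 * (t * ‖x‖) := by
            rw [norm_neg, norm_mul, Complex.norm_real, Real.norm_of_nonneg ht0.le]
        _ ≤ 2 * ‖x‖ * t := by nlinarith [norm_nonneg x]
  have h2 : IntervalIntegrable (fun t : ℝ => Complex.log (1 - ↑t * x) / ↑t) volume δ 1 := by
    apply ContinuousOn.intervalIntegrable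
    rw [uIcc_of_le hδ1]
    intro t ht
    apply ContinuousWithinAt.div
    · apply ContinuousAt.continuousWithinAt
      have hc : ContinuousAt (fun s : ℝ => (1:ℂ) - ↑s * x) t :=
        (continuous_const.sub (Complex.continuous_ofReal.mul continuous_const)).continuousAt
      exact Filter.Tendsto.clog hc (hx.slit (le_trans hδpos.le ht.1))
    · exact Complex.continuous_ofReal.continuousWithinAt
    · simp only [ne_eq, Complex.ofReal_eq_zero]
      linarith [ht.1, hδpos]
  exact h1.trans h2

lemma Li2_hasDerivAt {w : ℂ} (hw : OffCut w) :
    HasDerivAt Li2 (-Complex.log (1 - w) / w) w := by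
  have hw0 : w ≠ 0 := hw.ne_zero
  obtain ⟨ε₀, hε₀, hball⟩ := Metric.isOpen_iff.1 isOpen_offCut w hw
  set ε : ℝ := ε₀ / 2 with hεdef
  have hεpos : 0 < ε := by positivity
  have hsub : Metric.closedBall w ε ⊆ {w : ℂ | OffCut w} := by
    refine subset_trans ?_ hball
    refine subset_trans (Metric.closedBall_subset_ball ?_) subset_rfl
    linarith
  -- compact lower bound for ‖1 - t x‖
  set T : Set (ℝ × ℂ) := Icc (0:ℝ) 1 ×ˢ Metric.closedBall w ε with hTdef
  have hT : IsCompact T := isCompact_Icc.prod (isCompact_closedBall _ _)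
  have hTne : T.Nonempty := ⟨(0, w), by simp [hTdef, hεpos.le]⟩
  have hfc : ContinuousOn (fun p : ℝ × ℂ => ‖1 - ↑p.1 * p.2‖) T := by
    apply Continuous.continuousOn
    exact (continuous_const.sub ((Complex.continuous_ofReal.comp continuous_fst).mul
      continuous_snd)).norm
  obtain ⟨p₀, hp₀T, hmin'⟩ := hT.exists_isMinOn hTne hfc
  have hmin : ∀ p ∈ T, ‖1 - ↑p₀.1 * p₀.2‖ ≤ ‖1 - ↑p.1 * p.2‖ := fun p hp => hmin' hp
  set m : ℝ := ‖1 - ↑p₀.1 * p₀.2‖ with hmdef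
  have hslitT : ∀ p : ℝ × ℂ, p ∈ T → (1 - ↑p.1 * p.2) ∈ Complex.slitPlane := by
    rintro ⟨t, x⟩ ⟨ht, hx⟩
    exact (hsub hx).slit ht.1
  have hmpos : 0 < m := by
    rw [hmdef, norm_pos_iff]
    exact Complex.slitPlane_ne_zero (hslitT p₀ hp₀T)
  have key := intervalIntegral.hasDerivAt_integral_of_dominated_loc_of_deriv_le
    (F := fun x t => Complex.log (1 - ↑t * x) / ↑t)
    (F' := fun x (t : ℝ) => -((1 - ↑t * x)⁻¹)) (x₀ := w)
    (bound := fun _ => m⁻¹) (a := 0) (b := 1) (μ := volume) (Metric.ball_mem_nhds w hεpos)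
    (Filter.Eventually.of_forall fun x => Li2_integrand_meas x)
    (Li2_integrand_integrable hw)
    (by
      refine Measurable.aestronglyMeasurable ?_
      exact ((measurable_const.sub (Complex.measurable_ofReal.mul_const w)).inv).neg)
    (by
      filter_upwards with t ht x hx
      have htI : t ∈ Icc (0:ℝ) 1 := by
        rw [Set.uIoc_of_le zero_le_one] at ht
        exact ⟨ht.1.le, ht.2⟩
      have hmem : (t, x) ∈ T := ⟨htI, Metric.ball_subset_closedBall hx⟩
      have := hmin (t, x) hmem
      rw [norm_neg, norm_inv]
      exact inv_anti₀ hmpos this)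
    _root_.intervalIntegrable_const
    (by
      filter_upwards with t ht x hx
      have htI : t ∈ Icc (0:ℝ) 1 := by
        rw [Set.uIoc_of_le zero_le_one] at ht
        exact ⟨ht.1.le, ht.2⟩
      have ht0 : (0:ℝ) < t := by
        rw [Set.uIoc_of_le zero_le_one] at ht
        exact ht.1
      have hslit : (1 - ↑t * x) ∈ Complex.slitPlane :=
        hslitT (t, x) ⟨htI, Metric.ball_subset_closedBall hx⟩
      have hlin : HasDerivAt (fun x : ℂ => 1 - ↑t * x) (-↑t) x := by
        simpa using ((hasDerivAt_id x).const_mul (↑t : ℂ)).const_sub 1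
      have hlog := (Complex.hasDerivAt_log hslit).comp x hlin
      have := hlog.div_const (↑t : ℂ)
      convert this using 1
      · rfl
      · rfl
      have htne : (t : ℂ) ≠ 0 := by exact_mod_cast ht0.ne'
      rw [mul_div_assoc, neg_div, div_self htne, mul_neg_one])
  have hmain := key.2
  -- now identify the integral with -log(1-w)/w
  have hcont : ∀ t ∈ Icc (0:ℝ) 1, (1 - ↑t * w) ∈ Complex.slitPlane := fun t ht => hw.slit ht.1
  have hFTC : (∫ t in (0:ℝ)..1, (1 - ↑t * w)⁻¹) = -Complex.log (1 - w) / w := by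
    have hd : ∀ t ∈ Set.uIcc (0:ℝ) 1,
        HasDerivAt (fun s : ℝ => -Complex.log (1 - ↑s * w) / w) ((1 - ↑t * w)⁻¹) t := by
      intro t ht
      rw [Set.uIcc_of_le zero_le_one] at ht
      have hslit := hcont t ht
      have hlin : HasDerivAt (fun s : ℂ => 1 - s * w) (-w) (↑t : ℂ) := by
        simpa using ((hasDerivAt_id (↑t : ℂ)).mul_const w).const_sub 1
      have hlog := (Complex.hasDerivAt_log hslit).comp (↑t : ℂ) hlin
      have he := (hlog.neg.div_const w).comp_ofReal
      convert he using 1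
      · rfl
      rw [mul_neg, neg_neg, mul_div_assoc, div_self hw0, mul_one]
    have hi : IntervalIntegrable (fun t : ℝ => (1 - ↑t * w)⁻¹) volume 0 1 := by
      apply ContinuousOn.intervalIntegrable
      rw [Set.uIcc_of_le zero_le_one]
      refine ContinuousOn.inv₀ ?_ ?_
      · exact (continuous_const.sub (Complex.continuous_ofReal.mul continuous_const)).continuousOn
      · exact fun t ht => Complex.slitPlane_ne_zero (hcont t ht)
    have := intervalIntegral.integral_eq_sub_of_hasDerivAt hd hi
    rw [this]
    simp
  have hval : (∫ t in (0:ℝ)..1, -((1 - ↑t * w)⁻¹)) = -(-Complex.log (1 - w) / w) := by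
    rw [intervalIntegral.integral_neg, hFTC]
  rw [hval] at hmain
  have := hmain.neg
  rw [neg_neg] at this
  exact this

lemma xiC_ne {u : ℝ} (hu : 0 < u) (p : ℕ) : xiC u p ≠ 0 := by
  intro h
  have : (xiC u p).re = 0 := by rw [h]; simp
  simp [xiC] at this
  exact hu.ne' this


lemma offcut_exp (s c : ℝ) (hcase : s ≠ 0 ∨ (s = 0 ∧ c = -1)) (E : ℂ)
    (hsE : Real.sin E.im = -s ∨ Real.sin E.im = s) (hcE : Real.cos E.im = c) :
    OffCut (Complex.exp E) := by
  rcases hcase with hs | ⟨hs, hc⟩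
  · left
    rw [Complex.exp_im]
    rcases hsE with h | h <;> rw [h] <;> simp [Real.exp_ne_zero, hs]
  · right
    rw [Complex.exp_re, hcE, hc]
    nlinarith [Real.exp_pos E.re]

lemma pair_lemma (s c : ℝ) (hcase : s ≠ 0 ∨ (s = 0 ∧ c = -1)) (E E' : ℂ)
    (hE : Real.sin E.im = -s) (hE' : Real.sin E'.im = s)
    (hcE : Real.cos E.im = c) (hcE' : Real.cos E'.im = c) :
    1 - Complex.exp E ≠ 0 ∧ 1 - Complex.exp E' ≠ 0 ∧
      |Complex.arg (1 - Complex.exp E) + Complex.arg (1 - Complex.exp E')| < Real.pi := by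
  have hπ := Real.pi_pos
  have himA : (1 - Complex.exp E).im = Real.exp E.re * s := by
    rw [Complex.sub_im, Complex.one_im, Complex.exp_im, hE]; ring
  have himA' : (1 - Complex.exp E').im = -(Real.exp E'.re * s) := by
    rw [Complex.sub_im, Complex.one_im, Complex.exp_im, hE']; ring
  rcases hcase with hsne | ⟨hs0, hcm1⟩
  · rcases lt_or_gt_of_ne hsne with hs | hs
    · have hA : (1 - Complex.exp E).im < 0 := by
        rw [himA]; nlinarith [Real.exp_pos E.re]
      have hA' : 0 < (1 - Complex.exp E').im := by
        rw [himA']; nlinarith [Real.exp_pos E'.re]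
      have hne : 1 - Complex.exp E ≠ 0 := fun h => by rw [h] at hA; simp at hA
      have hne' : 1 - Complex.exp E' ≠ 0 := fun h => by rw [h] at hA'; simp at hA'
      refine ⟨hne, hne', ?_⟩
      have h1 : Complex.arg (1 - Complex.exp E) < 0 := Complex.arg_neg_iff.2 hA
      have h2 : -Real.pi < Complex.arg (1 - Complex.exp E) := Complex.neg_pi_lt_arg _
      have h3 : 0 ≤ Complex.arg (1 - Complex.exp E') := Complex.arg_nonneg_iff.2 hA'.le
      have h4 : Complex.arg (1 - Complex.exp E') < Real.pi := by
        refine lt_of_le_of_ne (Complex.arg_le_pi _) fun h => ?_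
        have := (Complex.arg_eq_pi_iff.1 h).2
        rw [this] at hA'; exact lt_irrefl _ hA'
      rw [abs_lt]; constructor <;> linarith
    · have hA : 0 < (1 - Complex.exp E).im := by
        rw [himA]; nlinarith [Real.exp_pos E.re]
      have hA' : (1 - Complex.exp E').im < 0 := by
        rw [himA']; nlinarith [Real.exp_pos E'.re]
      have hne : 1 - Complex.exp E ≠ 0 := fun h => by rw [h] at hA; simp at hA
      have hne' : 1 - Complex.exp E' ≠ 0 := fun h => by rw [h] at hA'; simp at hA'
      refine ⟨hne, hne', ?_⟩
      have h1 : Complex.arg (1 - Complex.exp E') < 0 := Complex.arg_neg_iff.2 hA'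
      have h2 : -Real.pi < Complex.arg (1 - Complex.exp E') := Complex.neg_pi_lt_arg _
      have h3 : 0 ≤ Complex.arg (1 - Complex.exp E) := Complex.arg_nonneg_iff.2 hA.le
      have h4 : Complex.arg (1 - Complex.exp E) < Real.pi := by
        refine lt_of_le_of_ne (Complex.arg_le_pi _) fun h => ?_
        have := (Complex.arg_eq_pi_iff.1 h).2
        rw [this] at hA; exact lt_irrefl _ hA
      rw [abs_lt]; constructor <;> linarith
  · have hAre : 0 < (1 - Complex.exp E).re := by
      rw [Complex.sub_re, Complex.one_re, Complex.exp_re, hcE, hcm1]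
      nlinarith [Real.exp_pos E.re]
    have hAim : (1 - Complex.exp E).im = 0 := by rw [himA, hs0]; ring
    have hA're : 0 < (1 - Complex.exp E').re := by
      rw [Complex.sub_re, Complex.one_re, Complex.exp_re, hcE', hcm1]
      nlinarith [Real.exp_pos E'.re]
    have hA'im : (1 - Complex.exp E').im = 0 := by rw [himA', hs0]; ring
    have hne : 1 - Complex.exp E ≠ 0 := fun h => by rw [h] at hAre; simp at hAre
    have hne' : 1 - Complex.exp E' ≠ 0 := fun h => by rw [h] at hA're; simp at hA're
    refine ⟨hne, hne', ?_⟩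
    rw [Complex.arg_eq_zero_iff.2 ⟨hAre.le, hAim⟩, Complex.arg_eq_zero_iff.2 ⟨hA're.le, hA'im⟩]
    simpa using hπ


lemma val_helperF (ξ L3 L4 w3 w4 uu : ℂ) (hξ : ξ ≠ 0) (h3 : w3 ≠ 0) (h4 : w4 ≠ 0) :
    (1 / ξ) * (-L3 / w3 * (w3 * -ξ)) - (1 / ξ) * (-L4 / w4 * (w4 * ξ)) + uu * 1
      = L3 + L4 + uu := by field_simp; ring

lemma val_helperG (ξ L1 L2 w1 w2 uu : ℂ) (hξ : ξ ≠ 0) (h1 : w1 ≠ 0) (h2 : w2 ≠ 0) :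
    (1 / ξ) * (-L1 / w1 * (w1 * -ξ)) - (1 / ξ) * (-L2 / w2 * (w2 * ξ)) - uu * 1
      = L1 + L2 - uu := by field_simp; ring

set_option maxHeartbeats 1000000 in
lemma aux (u : ℝ) (hu0 : 0 < u) (p : ℕ) (hp : 0 < p) (z : ℂ)
    (hz0 : 0 < z.re + (u / (2 * p * Real.pi)) * z.im)
    (hz1 : z.re + (u / (2 * p * Real.pi)) * z.im < 1 / p) :
    OffCut (Complex.exp (xiC u p * (1 - z))) ∧
    OffCut (Complex.exp (xiC u p * (1 + z))) ∧
    (1 - Complex.exp (-(xiC u p) * (1 + z))) ≠ 0 ∧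
    (1 - Complex.exp (-(xiC u p) * (1 - z))) ≠ 0 ∧
    |Complex.arg (1 - Complex.exp (-(xiC u p) * (1 + z))) +
      Complex.arg (1 - Complex.exp (-(xiC u p) * (1 - z)))| < Real.pi ∧
    HasDerivAt (Ffun u p)
      (Complex.log (1 - Complex.exp (-(xiC u p) * (1 + z))) +
       Complex.log (1 - Complex.exp (-(xiC u p) * (1 - z))) + u) z ∧
    HasDerivAt (fun w : ℂ => (1 / xiC u p) * Li2 (Complex.exp (xiC u p * (1 - w))) -
       (1 / xiC u p) * Li2 (Complex.exp (xiC u p * (1 + w))) -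
       (u : ℂ) * w + 4 * p * Real.pi ^ 2 / xiC u p)
      (Complex.log (1 - Complex.exp (-(xiC u p) * (1 + z))) +
       Complex.log (1 - Complex.exp (-(xiC u p) * (1 - z))) + u) z := by
  have hπ := Real.pi_pos
  have hp' : (0:ℝ) < p := by exact_mod_cast hp
  have hξ : xiC u p ≠ 0 := xiC_ne hu0 p
  set t₀ : ℝ := 2*p*Real.pi*z.re + u*z.im with ht₀def
  have h2pp : (0:ℝ) < 2*p*Real.pi := by positivity
  have hkey : t₀ = (2*p*Real.pi) * (z.re + (u / (2*p*Real.pi)) * z.im) := by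
    field_simp [ht₀def]; ring
  have ht00 : 0 < t₀ := by rw [hkey]; exact mul_pos h2pp hz0
  have ht02 : t₀ < 2*Real.pi := by
    rw [hkey]
    have h2 := (mul_lt_mul_iff_right₀ h2pp).2 hz1
    have h3 : (2*(p:ℝ)*Real.pi) * (1/(p:ℝ)) = 2*Real.pi := by field_simp
    linarith
  -- imaginary parts of the four exponents
  have hIm1 : (xiC u p * (1 - z)).im = -t₀ + (p:ℤ)*(2*Real.pi) := by
    simp [xiC, Complex.mul_im, ht₀def]; push_cast; ring
  have hIm2 : (xiC u p * (1 + z)).im = t₀ + (p:ℤ)*(2*Real.pi) := by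
    simp [xiC, Complex.mul_im, ht₀def]; push_cast; ring
  have hIm3 : (-(xiC u p) * (1 + z)).im = -t₀ + ((-(p:ℤ) : ℤ) : ℝ)*(2*Real.pi) := by
    simp [xiC, Complex.mul_im, ht₀def]; push_cast; ring
  have hIm4 : (-(xiC u p) * (1 - z)).im = t₀ + ((-(p:ℤ) : ℤ) : ℝ)*(2*Real.pi) := by
    simp [xiC, Complex.mul_im, ht₀def]; push_cast; ring
  set s : ℝ := Real.sin t₀ with hsdef
  set c : ℝ := Real.cos t₀ with hcdef
  have hs1 : Real.sin ((xiC u p * (1 - z)).im) = -s := by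
    rw [hIm1, Real.sin_add_int_mul_two_pi, Real.sin_neg]
  have hc1 : Real.cos ((xiC u p * (1 - z)).im) = c := by
    rw [hIm1, Real.cos_add_int_mul_two_pi, Real.cos_neg]
  have hs2 : Real.sin ((xiC u p * (1 + z)).im) = s := by
    rw [hIm2, Real.sin_add_int_mul_two_pi]
  have hc2 : Real.cos ((xiC u p * (1 + z)).im) = c := by
    rw [hIm2, Real.cos_add_int_mul_two_pi]
  have hs3 : Real.sin ((-(xiC u p) * (1 + z)).im) = -s := by
    rw [hIm3, Real.sin_add_int_mul_two_pi, Real.sin_neg]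
  have hc3 : Real.cos ((-(xiC u p) * (1 + z)).im) = c := by
    rw [hIm3, Real.cos_add_int_mul_two_pi, Real.cos_neg]
  have hs4 : Real.sin ((-(xiC u p) * (1 - z)).im) = s := by
    rw [hIm4, Real.sin_add_int_mul_two_pi]
  have hc4 : Real.cos ((-(xiC u p) * (1 - z)).im) = c := by
    rw [hIm4, Real.cos_add_int_mul_two_pi]
  -- trichotomy data
  have hcase : s ≠ 0 ∨ (s = 0 ∧ c = -1) := by
    rcases eq_or_ne s 0 with hs | hs
    · right
      refine ⟨hs, ?_⟩
      obtain ⟨n, hn⟩ := Real.sin_eq_zero_iff.1 hs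
      have h1 : (0:ℤ) < n := by
        have : (0:ℝ) < (n:ℝ) := by nlinarith
        exact_mod_cast this
      have h2 : n < 2 := by
        have : (n:ℝ) < 2 := by nlinarith
        exact_mod_cast this
      have hn1 : n = 1 := by omega
      have htpi : t₀ = Real.pi := by rw [← hn, hn1]; simp
      rw [hcdef, htpi, Real.cos_pi]
    · left; exact hs
  have hoff1 : OffCut (Complex.exp (xiC u p * (1 - z))) :=
    offcut_exp s c hcase _ (Or.inl hs1) hc1
  have hoff2 : OffCut (Complex.exp (xiC u p * (1 + z))) :=
    offcut_exp s c hcase _ (Or.inr hs2) hc2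
  have hoff3 : OffCut (Complex.exp (-(xiC u p) * (1 + z))) :=
    offcut_exp s c hcase _ (Or.inl hs3) hc3
  have hoff4 : OffCut (Complex.exp (-(xiC u p) * (1 - z))) :=
    offcut_exp s c hcase _ (Or.inr hs4) hc4
  have hpair := pair_lemma s c hcase
  obtain ⟨hA1ne, hA2ne, harg12⟩ := hpair _ _ hs1 hs2 hc1 hc2
  obtain ⟨hA3ne, hA4ne, harg34⟩ := hpair _ _ hs3 hs4 hc3 hc4
  -- exponential identities
  have hexpE : Complex.exp (2 * xiC u p) = ((Real.exp (2*u) : ℝ) : ℂ) := by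
    have h2 : 2 * xiC u p = ((2*u : ℝ) : ℂ) + ((2*(p:ℤ) : ℤ) : ℂ) * (2*Real.pi*Complex.I) := by
      push_cast [xiC]; ring
    rw [h2, Complex.exp_add, Complex.exp_int_mul_two_pi_mul_I, mul_one, Complex.ofReal_exp]
  set w1 := Complex.exp (xiC u p * (1 - z)) with hw1def
  set w2 := Complex.exp (xiC u p * (1 + z)) with hw2def
  set w3 := Complex.exp (-(xiC u p) * (1 + z)) with hw3def
  set w4 := Complex.exp (-(xiC u p) * (1 - z)) with hw4def
  have h12 : w1 * w2 = ((Real.exp (2*u) : ℝ) : ℂ) := by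
    rw [hw1def, hw2def, ← Complex.exp_add, ← hexpE]; congr 1; ring
  have h31 : ((Real.exp (2*u) : ℝ) : ℂ) * w3 = w1 := by
    rw [hw1def, hw3def, ← hexpE, ← Complex.exp_add]; congr 1; ring
  have h42 : ((Real.exp (2*u) : ℝ) : ℂ) * w4 = w2 := by
    rw [hw2def, hw4def, ← hexpE, ← Complex.exp_add]; congr 1; ring
  have h34 : ((Real.exp (2*u) : ℝ) : ℂ) * (w3 * w4) = 1 := by
    rw [hw3def, hw4def, ← hexpE, ← Complex.exp_add, ← Complex.exp_add]
    rw [show 2 * xiC u p + (-(xiC u p) * (1 + z) + -(xiC u p) * (1 - z)) = 0 by ring]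
    exact Complex.exp_zero
  have hprod : (1 - w1) * (1 - w2) = ((Real.exp (2*u) : ℝ) : ℂ) * ((1 - w3) * (1 - w4)) := by
    linear_combination h12 + h31 + h42 - h34
  -- log identities
  have e12 : Complex.log ((1-w1) * (1-w2)) = Complex.log (1-w1) + Complex.log (1-w2) := by
    apply Complex.log_mul hA1ne hA2ne
    have := abs_lt.1 harg12
    exact ⟨by linarith [this.1], (this.2).le⟩
  have e34 : Complex.log ((1-w3) * (1-w4)) = Complex.log (1-w3) + Complex.log (1-w4) := by
    apply Complex.log_mul hA3ne hA4ne
    have := abs_lt.1 harg34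
    exact ⟨by linarith [this.1], (this.2).le⟩
  have hlog12 : Complex.log (1-w1) + Complex.log (1-w2) =
      2*(u:ℂ) + (Complex.log (1-w3) + Complex.log (1-w4)) := by
    rw [← e12, ← e34, hprod,
      Complex.log_ofReal_mul (Real.exp_pos _) (mul_ne_zero hA3ne hA4ne), Real.log_exp]
    push_cast; ring
  -- derivatives
  have hLi1 := Li2_hasDerivAt hoff1
  have hLi2 := Li2_hasDerivAt hoff2
  have hLi3 := Li2_hasDerivAt hoff3
  have hLi4 := Li2_hasDerivAt hoff4
  have hlin1 : HasDerivAt (fun w : ℂ => xiC u p * (1 - w)) (-(xiC u p)) z := by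
    simpa using ((hasDerivAt_id z).const_sub 1).const_mul (xiC u p)
  have hlin2 : HasDerivAt (fun w : ℂ => xiC u p * (1 + w)) (xiC u p) z := by
    simpa using ((hasDerivAt_id z).const_add 1).const_mul (xiC u p)
  have hlin3 : HasDerivAt (fun w : ℂ => -(xiC u p) * (1 + w)) (-(xiC u p)) z := by
    simpa using ((hasDerivAt_id z).const_add 1).const_mul (-(xiC u p))
  have hlin4 : HasDerivAt (fun w : ℂ => -(xiC u p) * (1 - w)) (xiC u p) z := by
    simpa using ((hasDerivAt_id z).const_sub 1).const_mul (-(xiC u p))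
  have hexp1 := (Complex.hasDerivAt_exp (xiC u p * (1 - z))).comp z hlin1
  have hexp2 := (Complex.hasDerivAt_exp (xiC u p * (1 + z))).comp z hlin2
  have hexp3 := (Complex.hasDerivAt_exp (-(xiC u p) * (1 + z))).comp z hlin3
  have hexp4 := (Complex.hasDerivAt_exp (-(xiC u p) * (1 - z))).comp z hlin4
  have d1 := hLi1.comp z hexp1
  have d2 := hLi2.comp z hexp2
  have d3 := hLi3.comp z hexp3
  have d4 := hLi4.comp z hexp4
  have hw1ne : w1 ≠ 0 := Complex.exp_ne_zero _
  have hw2ne : w2 ≠ 0 := Complex.exp_ne_zero _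
  have hw3ne : w3 ≠ 0 := Complex.exp_ne_zero _
  have hw4ne : w4 ≠ 0 := Complex.exp_ne_zero _
  refine ⟨hoff1, hoff2, hA3ne, hA4ne, harg34, ?_, ?_⟩
  · -- derivative of Ffun
    have dF := (((d3.const_mul ((1:ℂ) / xiC u p)).sub
      (d4.const_mul ((1:ℂ) / xiC u p))).add
      ((hasDerivAt_id z).const_mul ((u:ℝ):ℂ))).sub_const (2 * Real.pi * Complex.I)
    have : HasDerivAt (Ffun u p)
        ((1 / xiC u p) * (-Complex.log (1 - w3) / w3 * (w3 * -(xiC u p))) -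
         (1 / xiC u p) * (-Complex.log (1 - w4) / w4 * (w4 * xiC u p)) +
         ((u:ℝ):ℂ) * 1) z := by
      unfold Ffun
      convert dF using 2
      · rfl
      · rfl
      all_goals simp [Function.comp]
    rw [← val_helperF (xiC u p) (Complex.log (1 - w3)) (Complex.log (1 - w4)) w3 w4 ((u:ℝ):ℂ)
      hξ hw3ne hw4ne]
    exact this
  · -- derivative of the alternative expression
    have dG := (((d1.const_mul ((1:ℂ) / xiC u p)).sub
      (d2.const_mul ((1:ℂ) / xiC u p))).sub
      ((hasDerivAt_id z).const_mul ((u:ℝ):ℂ))).add_const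
      (4 * (p:ℂ) * (Real.pi:ℂ) ^ 2 / xiC u p)
    have hG : HasDerivAt (fun w : ℂ => (1 / xiC u p) * Li2 (Complex.exp (xiC u p * (1 - w))) -
       (1 / xiC u p) * Li2 (Complex.exp (xiC u p * (1 + w))) -
       (u : ℂ) * w + 4 * p * Real.pi ^ 2 / xiC u p)
        ((1 / xiC u p) * (-Complex.log (1 - w1) / w1 * (w1 * -(xiC u p))) -
         (1 / xiC u p) * (-Complex.log (1 - w2) / w2 * (w2 * xiC u p)) -
         ((u:ℝ):ℂ) * 1) z := by
      convert dG using 2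
      · rfl
      · rfl
      all_goals simp [Function.comp]
    have h1 := val_helperG (xiC u p) (Complex.log (1 - w1)) (Complex.log (1 - w2)) w1 w2 ((u:ℝ):ℂ)
      hξ hw1ne hw2ne
    have h2 : (Complex.log (1 - Complex.exp (-(xiC u p) * (1 + z))) +
       Complex.log (1 - Complex.exp (-(xiC u p) * (1 - z))) + (u:ℂ)) =
        (1 / xiC u p) * (-Complex.log (1 - w1) / w1 * (w1 * -(xiC u p))) -
         (1 / xiC u p) * (-Complex.log (1 - w2) / w2 * (w2 * xiC u p)) -
         ((u:ℝ):ℂ) * 1 := by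
      rw [h1, ← hw3def, ← hw4def]
      linear_combination -hlog12
    rw [h2]
    exact hG

set_option maxHeartbeats 1000000 in
/-- On `U₀`, the alternative expression for `F` and the formula for its derivative. -/
theorem Ffun_alt_and_deriv (u : ℝ) (hu0 : 0 < u) (hu1 : u < arccosh (3/2))
    (p : ℕ) (hp : 0 < p) (z : ℂ)
    (hz0 : 0 < z.re + (u / (2 * p * Real.pi)) * z.im)
    (hz1 : z.re + (u / (2 * p * Real.pi)) * z.im < 1 / p) :
    ((∀ t : ℝ, 1 < t → Complex.exp (xiC u p * (1 - z)) ≠ (t : ℂ)) ∧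
     (∀ t : ℝ, 1 < t → Complex.exp (xiC u p * (1 + z)) ≠ (t : ℂ)) ∧
     (1 / xiC u p) * Li2 (Complex.exp (xiC u p * (1 - z))) -
       (1 / xiC u p) * Li2 (Complex.exp (xiC u p * (1 + z))) -
       (u : ℂ) * z + 4 * p * Real.pi ^ 2 / xiC u p = Ffun u p z) ∧
    ((∀ t : ℝ, t ≤ 0 →
        Complex.exp (u : ℂ) + Complex.exp (-(u : ℂ)) -
          Complex.exp (xiC u p * z) - Complex.exp (-(xiC u p * z)) ≠ (t : ℂ)) ∧
     HasDerivAt (Ffun u p)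
       (Complex.log (Complex.exp (u : ℂ) + Complex.exp (-(u : ℂ)) -
          Complex.exp (xiC u p * z) - Complex.exp (-(xiC u p * z)))) z) := by
  have hπ := Real.pi_pos
  have hp' : (0:ℝ) < p := by exact_mod_cast hp
  have hξ : xiC u p ≠ 0 := xiC_ne hu0 p
  obtain ⟨hoff1, hoff2, hA3ne, hA4ne, harg34, hdF, hdG⟩ := aux u hu0 p hp z hz0 hz1
  have claim1 : ∀ t : ℝ, 1 < t → Complex.exp (xiC u p * (1 - z)) ≠ (t : ℂ) := by
    intro t ht h
    rcases hoff1 with him | hre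
    · rw [h] at him; simp at him
    · rw [h] at hre; simp at hre; linarith
  have claim2 : ∀ t : ℝ, 1 < t → Complex.exp (xiC u p * (1 + z)) ≠ (t : ℂ) := by
    intro t ht h
    rcases hoff2 with him | hre
    · rw [h] at him; simp at him
    · rw [h] at hre; simp at hre; linarith
  -- the convex domain
  set S : Set ℂ := {w : ℂ | 0 < w.re + (u / (2 * p * Real.pi)) * w.im ∧
      w.re + (u / (2 * p * Real.pi)) * w.im < 1 / p} with hSdef
  have hlin : IsLinearMap ℝ (fun w : ℂ => w.re + (u / (2 * p * Real.pi)) * w.im) := by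
    constructor
    · intro x y; simp [Complex.add_re, Complex.add_im]; ring
    · intro cst x; simp [Complex.smul_re, Complex.smul_im]; ring
  have hconv : Convex ℝ S := by
    have : S = (fun w : ℂ => w.re + (u / (2 * p * Real.pi)) * w.im) ⁻¹' (Set.Ioo 0 (1/p)) := by
      ext w; simp [hSdef, Set.mem_Ioo]
    rw [this]
    exact (convex_Ioo _ _).is_linear_preimage hlin
  set H : ℂ → ℂ := fun w => ((1 / xiC u p) * Li2 (Complex.exp (xiC u p * (1 - w))) -
       (1 / xiC u p) * Li2 (Complex.exp (xiC u p * (1 + w))) -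
       (u : ℂ) * w + 4 * p * Real.pi ^ 2 / xiC u p) - Ffun u p w with hHdef
  have hH : ∀ w ∈ S, HasDerivAt H 0 w := by
    intro w hw
    obtain ⟨_, _, _, _, _, hdF', hdG'⟩ := aux u hu0 p hp w hw.1 hw.2
    have h2 := hdG'.sub hdF'
    rw [sub_self] at h2
    exact h2
  have hzero : ∀ w ∈ S, HasFDerivWithinAt H (0 : ℂ →L[ℝ] ℂ) S w := by
    intro w hw
    have h0 := ((hH w hw).hasFDerivAt.restrictScalars ℝ).hasFDerivWithinAt (s := S)
    have heq : ContinuousLinearMap.restrictScalars ℝ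
        (ContinuousLinearMap.toSpanSingleton ℂ (0:ℂ)) = (0 : ℂ →L[ℝ] ℂ) := by
      ext x; simp
    rwa [heq] at h0
  -- the base point z₀
  set z₀ : ℂ := Real.pi * Complex.I / xiC u p with hz₀def
  have hξz₀ : xiC u p * z₀ = Real.pi * Complex.I := by
    rw [hz₀def, mul_div_cancel₀ _ hξ]
  have hcombo : ∀ w : ℂ, w.re + (u / (2 * p * Real.pi)) * w.im
      = (xiC u p * w).im / (2 * p * Real.pi) := by
    intro w
    simp only [xiC, Complex.mul_im, Complex.add_re, Complex.add_im, Complex.ofReal_re,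
      Complex.ofReal_im, Complex.mul_re, Complex.I_re, Complex.I_im, Complex.natCast_re,
      Complex.natCast_im, Complex.re_ofNat, Complex.im_ofNat]
    push_cast
    field_simp
    ring
  have hz₀S : z₀ ∈ S := by
    constructor
    · rw [hcombo, hξz₀]
      simp only [Complex.mul_im, Complex.ofReal_re, Complex.I_im, Complex.ofReal_im, Complex.I_re]
      positivity
    · rw [hcombo, hξz₀]
      simp only [Complex.mul_im, Complex.ofReal_re, Complex.I_im, Complex.ofReal_im, Complex.I_re]
      rw [div_lt_div_iff₀ (by positivity) hp']
      nlinarith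
  have hzS : z ∈ S := ⟨hz0, hz1⟩
  have hbound : ∀ w ∈ S, ‖(fun _ : ℂ => (0 : ℂ →L[ℝ] ℂ)) w‖ ≤ 0 := by
    intro w hw; simp
  have hkey := hconv.norm_image_sub_le_of_norm_hasFDerivWithin_le
    (f := H) (f' := fun _ => (0 : ℂ →L[ℝ] ℂ)) hzero hbound hz₀S hzS
  rw [zero_mul] at hkey
  have hHz : H z = H z₀ := by
    have := norm_le_zero_iff.1 hkey
    exact sub_eq_zero.1 this
  -- value at z₀
  have hexpeq1 : Complex.exp (xiC u p * (1 + z₀)) = Complex.exp (xiC u p * (1 - z₀)) := by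
    rw [show xiC u p * (1 + z₀) = xiC u p * (1 - z₀) + 2 * Real.pi * Complex.I by
      linear_combination (2:ℂ) * hξz₀]
    rw [Complex.exp_add, Complex.exp_two_pi_mul_I, mul_one]
  have hexpeq2 : Complex.exp (-(xiC u p) * (1 + z₀)) = Complex.exp (-(xiC u p) * (1 - z₀)) := by
    rw [show -(xiC u p) * (1 - z₀) = -(xiC u p) * (1 + z₀) + 2 * Real.pi * Complex.I by
      linear_combination (2:ℂ) * hξz₀]
    rw [Complex.exp_add, Complex.exp_two_pi_mul_I, mul_one]
  have hHz₀ : H z₀ = 0 := by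
    rw [hHdef]
    simp only []
    unfold Ffun
    rw [hexpeq1, hexpeq2]
    have hx : 2*(Real.pi:ℂ)*Complex.I*xiC u p = 2*(Real.pi:ℂ)*Complex.I*(u:ℂ)
        - 4*(p:ℂ)*(Real.pi:ℂ)^2 := by
      simp only [xiC]; push_cast
      linear_combination (4*(p:ℂ)*(Real.pi:ℂ)^2) * Complex.I_mul_I
    have e1 : 4*(p:ℂ)*(Real.pi:ℂ)^2/xiC u p * xiC u p = 4*(p:ℂ)*(Real.pi:ℂ)^2 :=
      div_mul_cancel₀ _ hξ
    have key : (-(u:ℂ) * z₀ + 4 * p * Real.pi ^ 2 / xiC u p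
        - ((u:ℂ) * z₀ - 2 * Real.pi * Complex.I)) * xiC u p = 0 := by
      linear_combination (-2*(u:ℂ))*hξz₀ + hx + e1
    have : -(u:ℂ) * z₀ + 4 * p * Real.pi ^ 2 / xiC u p - ((u:ℂ) * z₀ - 2 * Real.pi * Complex.I)
        = 0 := (mul_eq_zero.1 key).resolve_right hξ
    linear_combination this
  have hident : (1 / xiC u p) * Li2 (Complex.exp (xiC u p * (1 - z))) -
       (1 / xiC u p) * Li2 (Complex.exp (xiC u p * (1 + z))) -
       (u : ℂ) * z + 4 * p * Real.pi ^ 2 / xiC u p = Ffun u p z := by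
    have := hHz.trans hHz₀
    rw [hHdef] at this
    exact sub_eq_zero.1 this
  -- part (ii)
  set A3 := 1 - Complex.exp (-(xiC u p) * (1 + z)) with hA3def
  set A4 := 1 - Complex.exp (-(xiC u p) * (1 - z)) with hA4def
  have e34 : Complex.log (A3 * A4) = Complex.log A3 + Complex.log A4 := by
    apply Complex.log_mul hA3ne hA4ne
    have := abs_lt.1 harg34
    exact ⟨by linarith [this.1], (this.2).le⟩
  have hexpu : Complex.exp (xiC u p) = ((Real.exp u : ℝ) : ℂ) := by
    rw [show xiC u p = ((u:ℝ):ℂ) + ((p:ℤ):ℂ) * (2 * Real.pi * Complex.I) by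
      push_cast [xiC]; ring]
    rw [Complex.exp_add, Complex.exp_int_mul_two_pi_mul_I, mul_one, Complex.ofReal_exp]
  have k1 : ((Real.exp u : ℝ) : ℂ) * Complex.exp (-(xiC u p) * (1 + z))
      = Complex.exp (-(xiC u p * z)) := by
    rw [← hexpu, ← Complex.exp_add]; exact congrArg Complex.exp (by ring)
  have k2 : ((Real.exp u : ℝ) : ℂ) * Complex.exp (-(xiC u p) * (1 - z))
      = Complex.exp (xiC u p * z) := by
    rw [← hexpu, ← Complex.exp_add]; exact congrArg Complex.exp (by ring)
  have k3 : ((Real.exp u : ℝ) : ℂ) *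
      (Complex.exp (-(xiC u p) * (1 + z)) * Complex.exp (-(xiC u p) * (1 - z)))
      = Complex.exp (-(u:ℂ)) := by
    rw [← hexpu, ← Complex.exp_add, ← Complex.exp_add]
    rw [show xiC u p + (-(xiC u p) * (1 + z) + -(xiC u p) * (1 - z))
        = -((u:ℝ):ℂ) + ((-(p:ℤ) : ℤ):ℂ) * (2 * Real.pi * Complex.I) by push_cast [xiC]; ring]
    rw [Complex.exp_add, Complex.exp_int_mul_two_pi_mul_I, mul_one]
  have hexpu2 : Complex.exp ((u:ℝ):ℂ) = ((Real.exp u : ℝ) : ℂ) := (Complex.ofReal_exp u).symm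
  have hcval : Complex.exp (u : ℂ) + Complex.exp (-(u : ℂ)) -
          Complex.exp (xiC u p * z) - Complex.exp (-(xiC u p * z))
      = ((Real.exp u : ℝ) : ℂ) * (A3 * A4) := by
    rw [hA3def, hA4def]
    linear_combination hexpu2 - k3 + k2 + k1
  have hargc : Complex.arg (Complex.exp (u : ℂ) + Complex.exp (-(u : ℂ)) -
          Complex.exp (xiC u p * z) - Complex.exp (-(xiC u p * z)))
      = Complex.arg A3 + Complex.arg A4 := by
    rw [hcval, Complex.arg_real_mul _ (Real.exp_pos u)]
    have := congrArg Complex.im e34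
    simpa [Complex.log_im] using this
  have hcne : Complex.exp (u : ℂ) + Complex.exp (-(u : ℂ)) -
          Complex.exp (xiC u p * z) - Complex.exp (-(xiC u p * z)) ≠ 0 := by
    rw [hcval]
    exact mul_ne_zero (by exact_mod_cast (Real.exp_pos u).ne') (mul_ne_zero hA3ne hA4ne)
  have claim3 : ∀ t : ℝ, t ≤ 0 →
        Complex.exp (u : ℂ) + Complex.exp (-(u : ℂ)) -
          Complex.exp (xiC u p * z) - Complex.exp (-(xiC u p * z)) ≠ (t : ℂ) := by
    intro t ht h
    rcases eq_or_lt_of_le ht with rfl | hlt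
    · exact hcne (by rw [h]; simp)
    · have hπeq : Complex.arg (Complex.exp (u : ℂ) + Complex.exp (-(u : ℂ)) -
          Complex.exp (xiC u p * z) - Complex.exp (-(xiC u p * z))) = Real.pi := by
        rw [h]; exact Complex.arg_ofReal_of_neg hlt
      rw [hargc] at hπeq
      rw [hπeq] at harg34
      simp [abs_of_pos hπ] at harg34
  have hlogc : Complex.log (Complex.exp (u : ℂ) + Complex.exp (-(u : ℂ)) -
          Complex.exp (xiC u p * z) - Complex.exp (-(xiC u p * z)))
      = Complex.log A3 + Complex.log A4 + (u:ℂ) := by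
    rw [hcval, Complex.log_ofReal_mul (Real.exp_pos u) (mul_ne_zero hA3ne hA4ne),
      Real.log_exp, e34]
    ring
  refine ⟨⟨claim1, claim2, hident⟩, claim3, ?_⟩
  rw [hlogc]
  exact hdF
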